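/- (Theorem 2: additivity is necessary and sufficient for identification up to a constant.) Let ℓ : Fin K → (Fin K → Fin M) → ℝ be a counterfactual loss. The following are equivalent: (i) there exists a function f such that for every probability mass function p on (Fin K) × (Fin K → Fin M), R(p; ℓ) = f(Φ⁺(p)); (ii) ℓ is additive, i.e., there exist weights ω : Fin K → Fin K → Fin M → ℝ and an intercept ϖ : (Fin K → Fin M) → ℝ with ℓ d y = (Σ over k of ω k d (y k)) + ϖ y for all d, y. -/

import Mathlib

open Finset


/-- The counterfactual risk `R(p; ℓ) = Σ_{(d,y)} ℓ d y · p(d,y)` for a pmf `p` on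
`(Fin K) × (Fin K → Fin M)` (joint law of the evaluated decision and the potential outcomes). -/
def cfRisk (K M : ℕ) (p : Fin K × (Fin K → Fin M) → ℝ)
    (ℓ : Fin K → (Fin K → Fin M) → ℝ) : ℝ :=
  ∑ d : Fin K, ∑ y : Fin K → Fin M, ℓ d y * p (d, y)

/-- The marginal map `Φ`: `Φ(p)(d, k, m) = Σ_{y : y k = m} p(d, y)`. -/
def Phi (K M : ℕ) (p : Fin K × (Fin K → Fin M) → ℝ) : Fin K × Fin K × Fin M → ℝ :=
  fun q => ∑ y ∈ Finset.univ.filter (fun y : Fin K → Fin M => y q.2.1 = q.2.2), p (q.1, y)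

/-- The extended marginal map `Φ⁺`: the pair of `Φ(p)` and the marginal of `p` on
potential-outcome vectors. -/
def PhiPlus (K M : ℕ) (p : Fin K × (Fin K → Fin M) → ℝ) :
    (Fin K × Fin K × Fin M → ℝ) × ((Fin K → Fin M) → ℝ) :=
  (Phi K M p, fun y => ∑ d : Fin K, p (d, y))

/-- Theorem 2: additivity is necessary and sufficient for identification up to a
constant: the counterfactual risk `R(·; ℓ)` is a function of the extended marginals `Φ⁺(p)`
over all pmfs `p` if and only if `ℓ` is additive. -/
theorem easy (K M : ℕ)
    (ℓ : Fin K → (Fin K → Fin M) → ℝ)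
    (ω : Fin K → Fin K → Fin M → ℝ) (ϖ : (Fin K → Fin M) → ℝ)
    (h : ∀ (d : Fin K) (y : Fin K → Fin M), ℓ d y = (∑ k : Fin K, ω k d (y k)) + ϖ y)
    (p : Fin K × (Fin K → Fin M) → ℝ) :
    cfRisk K M p ℓ =
      (∑ d : Fin K, ∑ k : Fin K, ∑ m : Fin M, ω k d m * Phi K M p (d, k, m))
      + ∑ y : Fin K → Fin M, ϖ y * (∑ d : Fin K, p (d, y)) := by
  unfold cfRisk
  have : ∀ d : Fin K, ∑ y : Fin K → Fin M, ℓ d y * p (d, y)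
      = (∑ k : Fin K, ∑ m : Fin M, ω k d m * Phi K M p (d, k, m))
        + ∑ y : Fin K → Fin M, ϖ y * p (d, y) := by
    intro d
    have h1 : ∀ y, ℓ d y * p (d, y)
        = (∑ k : Fin K, ω k d (y k) * p (d, y)) + ϖ y * p (d, y) := by
      intro y; rw [h d y]; rw [add_mul, Finset.sum_mul]
    rw [Finset.sum_congr rfl fun y _ => h1 y, Finset.sum_add_distrib]
    congr 1
    rw [Finset.sum_comm]
    refine Finset.sum_congr rfl fun k _ => ?_
    rw [show (∑ y : Fin K → Fin M, ω k d (y k) * p (d, y))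
        = ∑ m : Fin M, ∑ y ∈ Finset.univ.filter (fun y : Fin K → Fin M => y k = m),
            ω k d (y k) * p (d, y) from (Finset.sum_fiberwise _ _ _).symm]
    refine Finset.sum_congr rfl fun m _ => ?_
    unfold Phi
    rw [Finset.mul_sum]
    refine Finset.sum_congr rfl fun y hy => ?_
    simp only [Finset.mem_filter] at hy
    rw [hy.2]
  rw [Finset.sum_congr rfl fun d _ => this d, Finset.sum_add_distrib]
  congr 1
  rw [Finset.sum_comm]
  simp [Finset.mul_sum]

theorem rect_additive (K M : ℕ) (hK : 0 < K) (base : Fin K → Fin M)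
    (f : (Fin K → Fin M) → ℝ)
    (hrect : ∀ (y : Fin K → Fin M) (k j : Fin K), k ≠ j →
      f y + f (Function.update (Function.update y k (base k)) j (base j))
        = f (Function.update y k (base k)) + f (Function.update y j (base j))) :
    ∀ y, f y = (∑ k : Fin K, f (Function.update base k (y k))) - ((K : ℝ) - 1) * f base := by
  -- helper: claim holds when y differs from base in at most one coordinate
  have hone : ∀ (y : Fin K → Fin M) (k₀ : Fin K), (∀ i, i ≠ k₀ → y i = base i) →
      f y = (∑ k : Fin K, f (Function.update base k (y k))) - ((K : ℝ) - 1) * f base := by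
    intro y k₀ hy
    have hyeq : y = Function.update base k₀ (y k₀) := by
      funext i
      by_cases hi : i = k₀
      · subst hi; simp
      · rw [Function.update_of_ne hi]; exact hy i hi
    have hsum : ∑ k : Fin K, f (Function.update base k (y k))
        = f (Function.update base k₀ (y k₀)) + ((K : ℝ) - 1) * f base := by
      rw [← Finset.sum_erase_add _ _ (Finset.mem_univ k₀)]
      have : ∀ k ∈ Finset.univ.erase k₀, f (Function.update base k (y k)) = f base := by
        intro k hk
        rw [hy k (Finset.ne_of_mem_erase hk), Function.update_eq_self]
      rw [Finset.sum_congr rfl this, Finset.sum_const, Finset.card_erase_of_mem (Finset.mem_univ k₀),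
        Finset.card_univ, Fintype.card_fin]
      rw [nsmul_eq_mul, Nat.cast_sub hK]
      push_cast; ring
    rw [hsum, ← hyeq]; ring
  -- main strong induction on size of support
  suffices h : ∀ (n : ℕ) (y : Fin K → Fin M),
      (Finset.univ.filter (fun i => y i ≠ base i)).card ≤ n →
      f y = (∑ k : Fin K, f (Function.update base k (y k))) - ((K : ℝ) - 1) * f base by
    intro y; exact h _ y le_rfl
  intro n
  induction n with
  | zero =>
    intro y hcard
    refine hone y ⟨0, hK⟩ fun i _ => ?_
    by_contra hne
    have : i ∈ Finset.univ.filter (fun i => y i ≠ base i) := by simp [hne]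
    have := Finset.card_pos.mpr ⟨i, this⟩
    omega
  | succ n ih =>
    intro y hcard
    set S := Finset.univ.filter (fun i => y i ≠ base i) with hS
    by_cases hc : S.card ≤ n
    · exact ih y hc
    have hcard' : S.card = n + 1 := le_antisymm hcard (by omega)
    by_cases hc1 : S.card ≤ 1
    · -- at most one differing coordinate
      obtain ⟨k₀, hk₀⟩ : ∃ k₀, k₀ ∈ S := Finset.card_pos.mp (by omega)
      refine hone y k₀ fun i hi => ?_
      by_contra hne
      have hiS : i ∈ S := by simp [hS, hne]
      have := Finset.card_le_one.mp hc1 i hiS k₀ hk₀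
      exact hi this
    · -- at least two differing coordinates
      obtain ⟨k, hk, j, hj, hkj⟩ := Finset.one_lt_card.mp (by omega : 1 < S.card)
      -- support facts
      have hupd : ∀ (z : Fin K → Fin M) (i : Fin K),
          (Finset.univ.filter (fun l => Function.update z i (base i) l ≠ base l))
            = (Finset.univ.filter (fun l => z l ≠ base l)).erase i := by
        intro z i
        ext l
        simp only [Finset.mem_filter, Finset.mem_univ, true_and, Finset.mem_erase,
          Function.update_apply]
        by_cases hl : l = i
        · subst hl; simp
        · simp [hl]
      have hkS : (S.erase k).card = n := by
        rw [Finset.card_erase_of_mem hk, hcard']; omega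
      have hcard1 : (Finset.univ.filter
          (fun l => Function.update y k (base k) l ≠ base l)).card ≤ n := by
        rw [hupd, ← hS, hkS]
      have hcard2 : (Finset.univ.filter
          (fun l => Function.update y j (base j) l ≠ base l)).card ≤ n := by
        rw [hupd, ← hS, Finset.card_erase_of_mem hj, hcard']; omega
      have hcard3 : (Finset.univ.filter
          (fun l => Function.update (Function.update y k (base k)) j (base j) l ≠ base l)).card
            ≤ n := by
        rw [hupd]
        calc ((Finset.univ.filter
              (fun l => Function.update y k (base k) l ≠ base l)).erase j).card
            ≤ (Finset.univ.filter (fun l => Function.update y k (base k) l ≠ base l)).card :=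
              Finset.card_erase_le
          _ ≤ n := hcard1
      have e1 := ih _ hcard1
      have e2 := ih _ hcard2
      have e3 := ih _ hcard3
      have hfy : f y = f (Function.update y k (base k)) + f (Function.update y j (base j))
          - f (Function.update (Function.update y k (base k)) j (base j)) := by
        have := hrect y k j hkj; linarith
      rw [hfy, e1, e2, e3]
      have hsum : (∑ l : Fin K, f (Function.update base l (Function.update y k (base k) l)))
          + (∑ l : Fin K, f (Function.update base l (Function.update y j (base j) l)))
          - (∑ l : Fin K, f (Function.update base l
              (Function.update (Function.update y k (base k)) j (base j) l)))
          = ∑ l : Fin K, f (Function.update base l (y l)) := by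
        rw [← Finset.sum_add_distrib, ← Finset.sum_sub_distrib]
        refine Finset.sum_congr rfl fun l _ => ?_
        by_cases hlk : l = k
        · subst hlk
          have h1 : Function.update y l (base l) l = base l := Function.update_self _ _ _
          have h2 : Function.update y j (base j) l = y l := Function.update_of_ne hkj _ _
          have h3 : Function.update (Function.update y l (base l)) j (base j) l = base l := by
            rw [Function.update_of_ne hkj, Function.update_self]
          rw [h1, h2, h3, Function.update_eq_self]
          ring
        · by_cases hlj : l = j
          · subst hlj
            have h1 : Function.update y k (base k) l = y l := Function.update_of_ne hlk _ _
            have h2 : Function.update y l (base l) l = base l := Function.update_self _ _ _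
            have h3 : Function.update (Function.update y k (base k)) l (base l) l = base l :=
              Function.update_self _ _ _
            rw [h1, h2, h3, Function.update_eq_self]
            ring
          · have h1 : Function.update y k (base k) l = y l := Function.update_of_ne hlk _ _
            have h2 : Function.update y j (base j) l = y l := Function.update_of_ne hlj _ _
            have h3 : Function.update (Function.update y k (base k)) j (base j) l = y l := by
              rw [Function.update_of_ne hlj, Function.update_of_ne hlk]
            rw [h1, h2, h3]
            ring
      linarith [hsum]

theorem ortho (K M : ℕ) (hK : 2 ≤ K) (hM : 2 ≤ M)
    (ℓ : Fin K → (Fin K → Fin M) → ℝ)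
    (f : ((Fin K × Fin K × Fin M → ℝ) × ((Fin K → Fin M) → ℝ)) → ℝ)
    (hf : ∀ p : Fin K × (Fin K → Fin M) → ℝ,
        (∀ z, 0 ≤ p z) → (∑ z, p z = 1) →
        cfRisk K M p ℓ = f (PhiPlus K M p))
    (d : Fin K) (w : (Fin K → Fin M) → ℝ)
    (hw : ∀ (k : Fin K) (m : Fin M),
      ∑ y ∈ Finset.univ.filter (fun y : Fin K → Fin M => y k = m), w y = 0) :
    ∑ y : Fin K → Fin M, (ℓ d y - ℓ ⟨0, by omega⟩ y) * w y = 0 := by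
  set d0 : Fin K := ⟨0, by omega⟩ with hd0
  by_cases hdd : d = d0
  · subst hdd; simp
  -- setup
  haveI : Nonempty (Fin K → Fin M) := ⟨fun _ => ⟨0, by omega⟩⟩
  haveI : Nonempty (Fin K) := ⟨d0⟩
  set N : ℕ := Fintype.card (Fin K × (Fin K → Fin M)) with hN
  have hN0 : 0 < N := Fintype.card_pos
  have hNR : (0 : ℝ) < (N : ℝ) := by exact_mod_cast hN0
  set W : ℝ := ∑ y : Fin K → Fin M, |w y| with hW
  have hW0 : 0 ≤ W := Finset.sum_nonneg fun y _ => abs_nonneg _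
  set ε : ℝ := (N : ℝ)⁻¹ / (1 + W) with hε
  have hε0 : 0 < ε := div_pos (inv_pos.mpr hNR) (by linarith)
  have hεeq : ε * (1 + W) = (N : ℝ)⁻¹ := by
    rw [hε]; field_simp
  clear_value N W ε
  set v : Fin K × (Fin K → Fin M) → ℝ :=
    fun z => (if z.1 = d then w z.2 else 0) - (if z.1 = d0 then w z.2 else 0) with hv
  have hvabs : ∀ z, |v z| ≤ W := by
    intro z
    have hsingle : |w z.2| ≤ W := by
      rw [hW]
      exact Finset.single_le_sum (f := fun y => |w y|) (fun i _ => abs_nonneg _)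
        (Finset.mem_univ _)
    rw [hv]
    simp only
    by_cases h1 : z.1 = d
    · have h2 : z.1 ≠ d0 := by rw [h1]; exact hdd
      rw [if_pos h1, if_neg h2, sub_zero]
      exact hsingle
    · by_cases h2 : z.1 = d0
      · rw [if_neg h1, if_pos h2, zero_sub, abs_neg]
        exact hsingle
      · rw [if_neg h1, if_neg h2, sub_zero, abs_zero]
        exact hW0
  set u : Fin K × (Fin K → Fin M) → ℝ := fun _ => (N : ℝ)⁻¹ with hu
  set p : Fin K × (Fin K → Fin M) → ℝ := fun z => u z + ε * v z with hp
  clear_value v u p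
  -- u is a pmf
  have hu_nn : ∀ z, 0 ≤ u z := by
    intro z
    simp only [hu]
    positivity
  have hu_sum : ∑ z, u z = 1 := by
    rw [hu, Finset.sum_const, Finset.card_univ, ← hN, nsmul_eq_mul]
    field_simp
  -- sum of v over decisions is 0 for each y
  have hv_dsum : ∀ y : Fin K → Fin M, ∑ d' : Fin K, v (d', y) = 0 := by
    intro y
    rw [hv]
    simp only
    rw [Finset.sum_sub_distrib]
    rw [Finset.sum_ite_eq' Finset.univ d (fun _ => w y),
      Finset.sum_ite_eq' Finset.univ d0 (fun _ => w y)]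
    simp
  -- sum of v over filtered outcomes is 0 for each decision, k, m
  have hv_fsum : ∀ (d' : Fin K) (k : Fin K) (m : Fin M),
      ∑ y ∈ Finset.univ.filter (fun y : Fin K → Fin M => y k = m), v (d', y) = 0 := by
    intro d' k m
    rw [hv]
    simp only
    rw [Finset.sum_sub_distrib]
    by_cases h1 : d' = d <;> by_cases h2 : d' = d0 <;>
      simp [h1, h2, hw k m]
  -- p is a pmf
  have hp_nn : ∀ z, 0 ≤ p z := by
    intro z
    have a1 : ε * -|v z| ≤ ε * v z := mul_le_mul_of_nonneg_left (neg_abs_le (v z)) hε0.le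
    have a2 : ε * |v z| ≤ ε * W := mul_le_mul_of_nonneg_left (hvabs z) hε0.le
    have h2 : ε + ε * W = (N : ℝ)⁻¹ := by rw [← hεeq]; ring
    simp only [hp, hu]
    linarith
  have hp_sum : ∑ z, p z = 1 := by
    rw [hp]
    simp only
    rw [Finset.sum_add_distrib, hu_sum, ← Finset.mul_sum]
    have : ∑ z : Fin K × (Fin K → Fin M), v z = 0 := by
      rw [Fintype.sum_prod_type, Finset.sum_comm]
      rw [Finset.sum_congr rfl fun y _ => hv_dsum y]
      simp
    rw [this]; ring
  -- PhiPlus p = PhiPlus u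
  have hPhi : PhiPlus K M p = PhiPlus K M u := by
    unfold PhiPlus Phi
    refine Prod.ext ?_ ?_
    · funext q
      simp only [hp]
      rw [Finset.sum_add_distrib, ← Finset.mul_sum, hv_fsum q.1 q.2.1 q.2.2]
      ring
    · funext y
      simp only [hp]
      rw [Finset.sum_add_distrib, ← Finset.mul_sum, hv_dsum y]
      ring
  -- risks are equal
  have hrisk : cfRisk K M p ℓ = cfRisk K M u ℓ := by
    rw [hf p hp_nn hp_sum, hf u hu_nn hu_sum, hPhi]
  -- linearity
  have hlin : cfRisk K M p ℓ = cfRisk K M u ℓ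
      + ε * ∑ y : Fin K → Fin M, (ℓ d y - ℓ d0 y) * w y := by
    unfold cfRisk
    rw [hp]
    simp only
    have expand : ∀ (d' : Fin K) (y : Fin K → Fin M),
        ℓ d' y * (u (d', y) + ε * v (d', y))
          = ℓ d' y * u (d', y) + ε * (ℓ d' y * v (d', y)) := by
      intro d' y; ring
    rw [Finset.sum_congr rfl fun d' _ => Finset.sum_congr rfl fun y _ => expand d' y]
    rw [Finset.sum_congr rfl fun d' _ => Finset.sum_add_distrib]
    rw [Finset.sum_add_distrib]
    congr 1
    rw [Finset.sum_comm, Finset.mul_sum]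
    refine Finset.sum_congr rfl fun y _ => ?_
    rw [← Finset.mul_sum]
    congr 1
    rw [hv]
    simp only
    have : ∀ d' : Fin K, ℓ d' y * ((if d' = d then w y else 0) - (if d' = d0 then w y else 0))
        = (if d' = d then ℓ d' y * w y else 0) - (if d' = d0 then ℓ d' y * w y else 0) := by
      intro d'
      by_cases h1 : d' = d <;> by_cases h2 : d' = d0 <;>
        simp [h1, h2, hdd, (Ne.symm hdd : d0 ≠ d)] <;> ring
    rw [Finset.sum_congr rfl fun d' _ => this d', Finset.sum_sub_distrib]
    rw [Finset.sum_ite_eq' Finset.univ d (fun d' => ℓ d' y * w y),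
      Finset.sum_ite_eq' Finset.univ d0 (fun d' => ℓ d' y * w y)]
    simp; ring
  have : ε * ∑ y : Fin K → Fin M, (ℓ d y - ℓ d0 y) * w y = 0 := by linarith
  exact (mul_eq_zero.mp this).resolve_left (ne_of_gt hε0)


theorem stmt_3 (K M : ℕ) (hK : 2 ≤ K) (hM : 2 ≤ M)
    (ℓ : Fin K → (Fin K → Fin M) → ℝ) :
    (∃ f : ((Fin K × Fin K × Fin M → ℝ) × ((Fin K → Fin M) → ℝ)) → ℝ,
      ∀ p : Fin K × (Fin K → Fin M) → ℝ,
        (∀ z, 0 ≤ p z) → (∑ z, p z = 1) →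
        cfRisk K M p ℓ = f (PhiPlus K M p)) ↔
    (∃ (ω : Fin K → Fin K → Fin M → ℝ) (ϖ : (Fin K → Fin M) → ℝ),
      ∀ (d : Fin K) (y : Fin K → Fin M), ℓ d y = (∑ k : Fin K, ω k d (y k)) + ϖ y) := by
  constructor
  · rintro ⟨f, hf⟩
    set d0 : Fin K := ⟨0, by omega⟩ with hd0
    set base : Fin K → Fin M := fun _ => ⟨0, by omega⟩ with hbase
    set G : Fin K → (Fin K → Fin M) → ℝ := fun d y => ℓ d y - ℓ d0 y with hG
    -- single-indicator sum
    have key : ∀ (g : (Fin K → Fin M) → ℝ) (t : Fin K → Fin M),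
        ∑ y' : Fin K → Fin M, g y' * (if y' = t then (1:ℝ) else 0) = g t := by
      intro g t
      rw [Finset.sum_congr rfl (fun y' _ => by
        rw [mul_ite, mul_one, mul_zero] :
          ∀ y' ∈ Finset.univ, g y' * (if y' = t then (1:ℝ) else 0)
            = if y' = t then g y' else 0)]
      rw [Finset.sum_ite_eq' Finset.univ t g]
      simp
    -- rectangle identity for each decision
    have hrect : ∀ (d : Fin K) (y : Fin K → Fin M) (k j : Fin K), k ≠ j →
        G d y + G d (Function.update (Function.update y k (base k)) j (base j))
          = G d (Function.update y k (base k)) + G d (Function.update y j (base j)) := by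
      intro d y k j hkj
      set y2 := Function.update y k (base k) with hy2
      set y3 := Function.update y j (base j) with hy3
      set y4 := Function.update (Function.update y k (base k)) j (base j) with hy4
      set w : (Fin K → Fin M) → ℝ := fun y' =>
        ((if y' = y then (1:ℝ) else 0) - (if y' = y2 then (1:ℝ) else 0))
          - ((if y' = y3 then (1:ℝ) else 0) - (if y' = y4 then (1:ℝ) else 0)) with hwdef
      have hfilter : ∀ (t : Fin K → Fin M) (i : Fin K) (m : Fin M),
          ∑ y' ∈ Finset.univ.filter (fun y' : Fin K → Fin M => y' i = m),
            (if y' = t then (1:ℝ) else 0) = if t i = m then 1 else 0 := by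
        intro t i m
        rw [Finset.sum_ite_eq' _ t (fun _ => (1:ℝ))]
        by_cases h : t i = m <;> simp [h]
      have hw : ∀ (i : Fin K) (m : Fin M),
          ∑ y' ∈ Finset.univ.filter (fun y' : Fin K → Fin M => y' i = m), w y' = 0 := by
        intro i m
        rw [hwdef]
        simp only
        rw [Finset.sum_sub_distrib, Finset.sum_sub_distrib, Finset.sum_sub_distrib]
        rw [hfilter y i m, hfilter y2 i m, hfilter y3 i m, hfilter y4 i m]
        by_cases hik : i = k
        · subst hik
          have e2 : y2 i = base i := by rw [hy2, Function.update_self]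
          have e3 : y3 i = y i := by rw [hy3, Function.update_of_ne hkj]
          have e4 : y4 i = base i := by
            rw [hy4, Function.update_of_ne hkj, Function.update_self]
          rw [e2, e3, e4]; ring
        · by_cases hij : i = j
          · subst hij
            have e2 : y2 i = y i := by rw [hy2, Function.update_of_ne (Ne.symm (hik ∘ Eq.symm))]
            have e3 : y3 i = base i := by rw [hy3, Function.update_self]
            have e4 : y4 i = base i := by rw [hy4, Function.update_self]
            rw [e2, e3, e4]; ring
          · have e2 : y2 i = y i := by rw [hy2, Function.update_of_ne hik]
            have e3 : y3 i = y i := by rw [hy3, Function.update_of_ne hij]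
            have e4 : y4 i = y i := by
              rw [hy4, Function.update_of_ne hij, Function.update_of_ne hik]
            rw [e2, e3, e4]; ring
      have horth := ortho K M hK hM ℓ f hf d w hw
      rw [Finset.sum_congr rfl (fun y' _ => by rw [hwdef]; ring_nf :
        ∀ y' ∈ Finset.univ, (ℓ d y' - ℓ ⟨0, by omega⟩ y') * w y'
          = ((ℓ d y' - ℓ ⟨0, by omega⟩ y') * (if y' = y then (1:ℝ) else 0)
              - (ℓ d y' - ℓ ⟨0, by omega⟩ y') * (if y' = y2 then (1:ℝ) else 0))
            - ((ℓ d y' - ℓ ⟨0, by omega⟩ y') * (if y' = y3 then (1:ℝ) else 0)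
              - (ℓ d y' - ℓ ⟨0, by omega⟩ y') * (if y' = y4 then (1:ℝ) else 0)))] at horth
      rw [Finset.sum_sub_distrib, Finset.sum_sub_distrib, Finset.sum_sub_distrib] at horth
      rw [key, key, key, key] at horth
      have hGdef : ∀ y', G d y' = ℓ d y' - ℓ ⟨0, by omega⟩ y' := fun y' => rfl
      rw [hGdef, hGdef, hGdef, hGdef]
      linarith
    -- additive decomposition of each G d
    have hadd := fun d : Fin K =>
      rect_additive K M (by omega) base (G d) (hrect d)
    refine ⟨fun k d m => G d (Function.update base k m) - (((K:ℝ) - 1)/(K:ℝ)) * G d base,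
      ℓ d0, fun d y => ?_⟩
    have hKR : (K : ℝ) ≠ 0 := by positivity
    have hsum : ∑ k : Fin K,
        (G d (Function.update base k (y k)) - (((K:ℝ) - 1)/(K:ℝ)) * G d base)
        = (∑ k : Fin K, G d (Function.update base k (y k))) - ((K:ℝ) - 1) * G d base := by
      rw [Finset.sum_sub_distrib, Finset.sum_const, Finset.card_univ, Fintype.card_fin,
        nsmul_eq_mul]
      field_simp
    rw [hsum, ← hadd d y]
    show ℓ d y = (ℓ d y - ℓ d0 y) + ℓ d0 y
    ring
  · rintro ⟨ω, ϖ, h⟩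
    exact ⟨fun q => (∑ d : Fin K, ∑ k : Fin K, ∑ m : Fin M, ω k d m * q.1 (d, k, m))
        + ∑ y : Fin K → Fin M, ϖ y * q.2 y,
      fun p _ _ => easy K M ℓ ω ϖ h p⟩
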